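/- Let n, P be integers with 0 < P ≤ n, and let μ be a real number with 0 < μ ≤ P. Fix any set S of ⌊nμ/P⌋ positions among 1,…,n. Then the probability, over a uniformly random permutation of the n items, that at least ⌈4μ⌉ of the positions of S are occupied by pink items, is at most 4^{−μ}. -/

import Mathlib

open Finset

lemma lemA (n : ℕ) (W : Finset (Fin n)) :
    (univ.filter (fun τ : Equiv.Perm (Fin n) => ∀ a ∈ W, τ a = a)).card
      ≤ (n - W.card).factorial := by
  rw [← Fintype.card_subtype]
  have hiff : ∀ (τ : {τ : Equiv.Perm (Fin n) // ∀ a ∈ W, τ a = a}) (x : Fin n),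
      x ∉ W ↔ τ.1 x ∉ W := by
    intro τ x
    constructor
    · intro hx hmem
      have h1 := τ.2 _ hmem
      have h2 : (τ.1 : Equiv.Perm (Fin n)) x = x := τ.1.injective h1
      exact hx (h2 ▸ hmem)
    · intro hx hmem
      exact hx (by rw [τ.2 x hmem]; exact hmem)
  have key : Fintype.card {τ : Equiv.Perm (Fin n) // ∀ a ∈ W, τ a = a}
      ≤ Fintype.card (Equiv.Perm {x : Fin n // x ∉ W}) := by
    apply Fintype.card_le_of_injective
      (fun τ => τ.1.subtypePerm (fun x => (hiff τ x).symm))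
    intro τ₁ τ₂ h
    ext x
    by_cases hx : x ∈ W
    · rw [τ₁.2 _ hx, τ₂.2 _ hx]
    · simp only at h
      have h2 : τ₁.1.subtypePerm (fun x => (hiff τ₁ x).symm) (⟨x, hx⟩ : {x : Fin n // x ∉ W}) = τ₂.1.subtypePerm (fun x => (hiff τ₂ x).symm) (⟨x, hx⟩ : {x : Fin n // x ∉ W}) := by
        rw [h]
      rw [Equiv.Perm.subtypePerm_apply, Equiv.Perm.subtypePerm_apply, Subtype.ext_iff] at h2
      have h3 : τ₁.1 x = τ₂.1 x := by simpa using h2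
      exact congrArg Fin.val h3
  calc _ ≤ _ := key
    _ = _ := by
        rw [Fintype.card_perm, Fintype.card_subtype_compl, Fintype.card_fin, Fintype.card_coe]
lemma lemB (n k : ℕ) (g h : Fin k → Fin n) (hinj : Function.Injective h) :
    (univ.filter fun σ : Equiv.Perm (Fin n) => ∀ j, σ (g j) = h j).card
      ≤ (n - k).factorial := by
  rcases (univ.filter fun σ : Equiv.Perm (Fin n) => ∀ j, σ (g j) = h j).eq_empty_or_nonempty
    with he | ⟨σ₀, hσ₀⟩
  · simp [he]
  · have h0 : ∀ j, σ₀ (g j) = h j := (mem_filter.mp hσ₀).2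
    set W : Finset (Fin n) := univ.image h with hW
    have hWcard : W.card = k := by
      rw [hW, card_image_of_injective _ hinj, card_univ, Fintype.card_fin]
    have key := Finset.card_le_card_of_injOn (fun σ => σ * σ₀⁻¹)
      (s := univ.filter fun σ : Equiv.Perm (Fin n) => ∀ j, σ (g j) = h j)
      (t := univ.filter (fun τ : Equiv.Perm (Fin n) => ∀ a ∈ W, τ a = a)) ?_ ?_
    · calc _ ≤ _ := key
        _ ≤ (n - W.card).factorial := lemA n W
        _ = (n - k).factorial := by rw [hWcard]
    · intro σ hσ
      rw [Finset.mem_coe, mem_filter] at hσ ⊢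
      refine ⟨mem_univ _, ?_⟩
      intro a ha
      rw [hW, mem_image] at ha
      obtain ⟨j, -, rfl⟩ := ha
      have : σ₀⁻¹ (h j) = g j := by rw [← h0 j]; simp
      simp [Equiv.Perm.mul_apply, this, hσ.2 j]
    · intro σ₁ h₁ σ₂ h₂ he
      simpa using mul_right_cancel (b := σ₀⁻¹) he
lemma lemC (n k P : ℕ) (Pink : Finset (Fin n)) (hPink : Pink.card = P) (g : Fin k ↪ Fin n) :
    (univ.filter fun σ : Equiv.Perm (Fin n) => ∀ j, σ (g j) ∈ Pink).card
      ≤ (n - k).factorial * P.descFactorial k := by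
  set s := univ.filter fun σ : Equiv.Perm (Fin n) => ∀ j, σ (g j) ∈ Pink with hs
  set f : Equiv.Perm (Fin n) → (Fin k → Fin n) := fun σ j => σ (g j) with hf
  have step1 : s.card ≤ (n - k).factorial * (s.image f).card := by
    apply Finset.card_le_mul_card_image
    intro a ha
    rw [mem_image] at ha
    obtain ⟨σ₀, hσ₀, rfl⟩ := ha
    have hainj : Function.Injective (f σ₀) := fun i j hij => by
      have := σ₀.injective hij
      exact g.injective this
    calc (s.filter fun x => f x = f σ₀).card
        ≤ (univ.filter fun σ : Equiv.Perm (Fin n) => ∀ j, σ (g j) = f σ₀ j).card := by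
          apply Finset.card_le_card
          intro σ hσ
          rw [mem_filter] at hσ ⊢
          exact ⟨mem_univ _, fun j => congrFun hσ.2 j⟩
      _ ≤ (n - k).factorial := lemB n k g (f σ₀) hainj
  have step2 : (s.image f).card ≤ P.descFactorial k := by
    have hsub : s.image f ⊆ univ.filter
        (fun h : Fin k → Fin n => Function.Injective h ∧ ∀ j, h j ∈ Pink) := by
      intro a ha
      rw [mem_image] at ha
      obtain ⟨σ₀, hσ₀, rfl⟩ := ha
      rw [mem_filter]
      refine ⟨mem_univ _, fun i j hij => g.injective (σ₀.injective hij), ?_⟩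
      rw [hs, mem_filter] at hσ₀
      exact hσ₀.2
    refine le_trans (Finset.card_le_card hsub) ?_
    rw [← Fintype.card_subtype]
    have : Fintype.card {h : Fin k → Fin n // Function.Injective h ∧ ∀ j, h j ∈ Pink}
        ≤ Fintype.card (Fin k ↪ ↥Pink) := by
      apply Fintype.card_le_of_injective
        (fun h => ⟨fun j => ⟨h.1 j, h.2.2 j⟩, fun i j hij => h.2.1 (by
          simpa [Subtype.ext_iff] using hij)⟩)
      intro h₁ h₂ hh
      apply Subtype.ext
      funext j
      have := congrFun (congrArg (fun (e : Fin k ↪ ↥Pink) => e.toFun) hh) j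
      simpa [Subtype.ext_iff] using this
    refine le_trans this ?_
    rw [Fintype.card_embedding_eq, Fintype.card_coe, Fintype.card_fin, hPink]
  calc s.card ≤ (n - k).factorial * (s.image f).card := step1
    _ ≤ (n - k).factorial * P.descFactorial k := Nat.mul_le_mul_left _ step2
lemma lemMain (n k P : ℕ) (Pink S : Finset (Fin n)) (hPink : Pink.card = P) :
    (univ.filter fun σ : Equiv.Perm (Fin n) =>
        k ≤ (S.filter fun i => σ i ∈ Pink).card).card * k.factorial
      ≤ S.card.descFactorial k * ((n - k).factorial * P.descFactorial k) := by
  classical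
  set F : Equiv.Perm (Fin n) → Finset (Fin n) := fun σ => S.filter fun i => σ i ∈ Pink with hF
  set A := univ.filter fun σ : Equiv.Perm (Fin n) => k ≤ (F σ).card with hA
  set B := univ.filter
    (fun p : Equiv.Perm (Fin n) × (Fin k ↪ Fin n) => ∀ j, p.2 j ∈ F p.1) with hB
  -- lower bound
  have hlow : A.card * k.factorial ≤ B.card := by
    have hsum : B.card = ∑ σ ∈ (univ : Finset (Equiv.Perm (Fin n))),
        (B.filter fun p => p.1 = σ).card :=
      Finset.card_eq_sum_card_fiberwise (fun p _ => mem_univ p.1)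
    have hfib : ∀ σ ∈ A, k.factorial ≤ (B.filter fun p => p.1 = σ).card := by
      intro σ hσ
      rw [hA, mem_filter] at hσ
      have hinj : ∀ (t₁ t₂ : Fin k ↪ ↥(F σ)),
          t₁.trans (Function.Embedding.subtype _) = t₂.trans (Function.Embedding.subtype _)
            → t₁ = t₂ := by
        intro t₁ t₂ h
        apply Function.Embedding.ext
        intro j
        apply Subtype.ext
        exact congrFun (congrArg (fun (e : Fin k ↪ Fin n) => e.toFun) h) j
      have key := Finset.card_le_card_of_injOn
        (f := fun e : Fin k ↪ ↥(F σ) => (σ, e.trans (Function.Embedding.subtype _)))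
        (s := univ) (t := B.filter fun p => p.1 = σ) ?_ ?_
      · refine le_trans ?_ key
        rw [card_univ, Fintype.card_embedding_eq, Fintype.card_coe, Fintype.card_fin]
        calc k.factorial = k.descFactorial k := (Nat.descFactorial_self k).symm
          _ ≤ (F σ).card.descFactorial k := Nat.descFactorial_le k hσ.2
      · intro e _
        rw [Finset.mem_coe, mem_filter, hB, mem_filter]
        exact ⟨⟨mem_univ _, fun j => (e j).2⟩, rfl⟩
      · intro e₁ _ e₂ _ h
        exact hinj e₁ e₂ (congrArg Prod.snd h)
    calc A.card * k.factorial = ∑ _σ ∈ A, k.factorial := by rw [sum_const, smul_eq_mul]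
      _ ≤ ∑ σ ∈ A, (B.filter fun p => p.1 = σ).card := Finset.sum_le_sum hfib
      _ ≤ ∑ σ ∈ (univ : Finset (Equiv.Perm (Fin n))), (B.filter fun p => p.1 = σ).card :=
          Finset.sum_le_sum_of_subset (subset_univ A)
      _ = B.card := hsum.symm
  -- upper bound
  have hup : B.card ≤ ((n - k).factorial * P.descFactorial k) * (B.image Prod.snd).card := by
    apply Finset.card_le_mul_card_image
    intro g hg
    have key := Finset.card_le_card_of_injOn (f := Prod.fst)
      (s := B.filter fun p => p.2 = g)
      (t := univ.filter fun σ : Equiv.Perm (Fin n) => ∀ j, σ (g j) ∈ Pink) ?_ ?_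
    · exact le_trans key (lemC n k P Pink hPink g)
    · intro p hp
      rw [Finset.mem_coe, mem_filter, hB, mem_filter] at hp
      obtain ⟨⟨-, hmem⟩, rfl⟩ := hp
      rw [Finset.mem_coe, mem_filter]
      exact ⟨mem_univ _, fun j => (mem_filter.mp (hmem j)).2⟩
    · intro p₁ h₁ p₂ h₂ h
      rw [Finset.mem_coe, mem_filter] at h₁ h₂
      exact Prod.ext h (h₁.2.trans h₂.2.symm)
  have himg : (B.image Prod.snd).card ≤ S.card.descFactorial k := by
    have hsub : B.image Prod.snd ⊆ univ.filter (fun g : Fin k ↪ Fin n => ∀ j, g j ∈ S) := by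
      intro g hg
      rw [mem_image] at hg
      obtain ⟨p, hp, rfl⟩ := hg
      rw [hB, mem_filter] at hp
      rw [mem_filter]
      exact ⟨mem_univ _, fun j => (mem_filter.mp (hp.2 j)).1⟩
    refine le_trans (Finset.card_le_card hsub) ?_
    rw [← Fintype.card_subtype]
    have : Fintype.card {g : Fin k ↪ Fin n // ∀ j, g j ∈ S}
        ≤ Fintype.card (Fin k ↪ ↥S) := by
      apply Fintype.card_le_of_injective
        (fun g => ⟨fun j => ⟨g.1 j, g.2 j⟩, fun i j hij => g.1.injective (by
          simpa [Subtype.ext_iff] using hij)⟩)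
      intro g₁ g₂ hh
      apply Subtype.ext
      apply Function.Embedding.ext
      intro j
      have := congrFun (congrArg (fun (e : Fin k ↪ ↥S) => e.toFun) hh) j
      simpa [Subtype.ext_iff] using this
    refine le_trans this ?_
    rw [Fintype.card_embedding_eq, Fintype.card_coe, Fintype.card_fin]
  calc A.card * k.factorial ≤ B.card := hlow
    _ ≤ ((n - k).factorial * P.descFactorial k) * (B.image Prod.snd).card := hup
    _ ≤ ((n - k).factorial * P.descFactorial k) * S.card.descFactorial k :=
        Nat.mul_le_mul_left _ himg
    _ = S.card.descFactorial k * ((n - k).factorial * P.descFactorial k) := Nat.mul_comm _ _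
lemma lemRatio (P n : ℕ) (h : P ≤ n) :
    ∀ k, P.descFactorial k * n ^ k ≤ P ^ k * n.descFactorial k := by
  intro k
  induction k with
  | zero => simp
  | succ k ih =>
    rw [Nat.descFactorial_succ, Nat.descFactorial_succ, pow_succ, pow_succ]
    have h1 : (P - k) * n ≤ P * (n - k) := by
      rw [Nat.sub_mul, Nat.mul_sub]
      exact Nat.sub_le_sub_left (by rw [Nat.mul_comm P k]; exact Nat.mul_le_mul_left k h) _
    calc (P - k) * P.descFactorial k * (n ^ k * n)
        = ((P - k) * n) * (P.descFactorial k * n ^ k) := by ring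
      _ ≤ (P * (n - k)) * (P ^ k * n.descFactorial k) := Nat.mul_le_mul h1 ih
      _ = P ^ k * P * ((n - k) * n.descFactorial k) := by ring

lemma lemAnalytic (μ : ℝ) (hμ : 0 < μ) (k : ℕ) (hk : 4 * μ ≤ k) :
    μ ^ k / k.factorial ≤ (4 : ℝ) ^ (-μ) := by
  have he : Real.exp 1 < 2.7182818286 := Real.exp_one_lt_d9
  have he0 : (0:ℝ) < Real.exp 1 := Real.exp_pos 1
  have hf : (0:ℝ) < k.factorial := by exact_mod_cast Nat.factorial_pos k
  have h1 : μ ^ k ≤ ((k : ℝ) / 4) ^ k := by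
    apply pow_le_pow_left₀ hμ.le
    linarith
  have h2 : ((k : ℝ)) ^ k / k.factorial ≤ Real.exp k :=
    Real.pow_div_factorial_le_exp (x := (k:ℝ)) (by positivity) k
  have h3 : μ ^ k / k.factorial ≤ (Real.exp 1 / 4) ^ k := by
    have e1 : ((k : ℝ) / 4) ^ k / k.factorial = ((k:ℝ) ^ k / k.factorial) / 4 ^ k := by
      rw [div_pow]; ring
    have e2 : (Real.exp 1 / 4) ^ k = Real.exp k / 4 ^ k := by
      rw [div_pow, Real.exp_one_pow]
    calc μ ^ k / k.factorial ≤ ((k : ℝ) / 4) ^ k / k.factorial := by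
          gcongr
      _ = ((k:ℝ) ^ k / k.factorial) / 4 ^ k := e1
      _ ≤ Real.exp k / 4 ^ k := by
          gcongr
      _ = (Real.exp 1 / 4) ^ k := e2.symm
  have hb0 : (0:ℝ) < Real.exp 1 / 4 := by positivity
  have hb1 : Real.exp 1 / 4 ≤ 1 := by nlinarith
  have h4 : (Real.exp 1 / 4) ^ k = (Real.exp 1 / 4) ^ ((k : ℝ)) := by
    rw [Real.rpow_natCast]
  have h5 : (Real.exp 1 / 4) ^ ((k : ℝ)) ≤ (Real.exp 1 / 4) ^ (4 * μ) :=
    Real.rpow_le_rpow_of_exponent_ge hb0 hb1 hk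
  have h6 : (Real.exp 1 / 4) ^ (4 * μ) = ((Real.exp 1 / 4) ^ (4 : ℝ)) ^ μ := by
    rw [← Real.rpow_mul hb0.le]
  have h7 : (Real.exp 1 / 4) ^ (4 : ℝ) ≤ (4 : ℝ)⁻¹ := by
    have : (Real.exp 1 / 4) ^ (4 : ℝ) = (Real.exp 1 / 4) ^ (4 : ℕ) := by
      rw [← Real.rpow_natCast (Real.exp 1 / 4) 4]; norm_num
    rw [this]
    have h4' : (Real.exp 1 / 4) ^ (4:ℕ) ≤ (2.7182818286 / 4 : ℝ) ^ (4:ℕ) := by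
      apply pow_le_pow_left₀ hb0.le
      linarith
    refine le_trans h4' ?_
    norm_num
  have h8 : ((Real.exp 1 / 4) ^ (4 : ℝ)) ^ μ ≤ ((4 : ℝ)⁻¹) ^ μ :=
    Real.rpow_le_rpow (Real.rpow_nonneg hb0.le _) h7 hμ.le
  have h9 : ((4 : ℝ)⁻¹) ^ μ = (4 : ℝ) ^ (-μ) := by
    rw [Real.rpow_neg (by norm_num), Real.inv_rpow (by norm_num)]
  calc μ ^ k / k.factorial ≤ (Real.exp 1 / 4) ^ k := h3
    _ = (Real.exp 1 / 4) ^ ((k : ℝ)) := h4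
    _ ≤ (Real.exp 1 / 4) ^ (4 * μ) := h5
    _ = ((Real.exp 1 / 4) ^ (4 : ℝ)) ^ μ := h6
    _ ≤ ((4 : ℝ)⁻¹) ^ μ := h8
    _ = (4 : ℝ) ^ (-μ) := h9

/-- There are `n` items, a fixed set `Pink` of `P` of them pink
(`0 < P ≤ n`), and `0 < μ ≤ P`. For any fixed set `S` of `⌊nμ/P⌋` positions, the number of
permutations for which at least `⌈4μ⌉` of the positions of `S` are occupied by pink items
is at most `n! · 4^{-μ}`. -/
theorem stmt_15 (n P : ℕ) (hP : 0 < P) (hPn : P ≤ n)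
    (μ : ℝ) (hμ0 : 0 < μ) (hμP : μ ≤ (P : ℝ))
    (Pink : Finset (Fin n)) (hPink : Pink.card = P)
    (S : Finset (Fin n)) (hS : S.card = ⌊(n : ℝ) * μ / (P : ℝ)⌋₊) :
    (({σ : Equiv.Perm (Fin n) |
        ⌈4 * μ⌉₊ ≤ (S.filter fun i => σ i ∈ Pink).card}).ncard : ℝ)
      ≤ (n.factorial : ℝ) * (4 : ℝ) ^ (-μ) := by
  classical
  set k := ⌈4 * μ⌉₊ with hk
  have hn : 0 < n := lt_of_lt_of_le hP hPn
  have hrpow_pos : (0:ℝ) < (4:ℝ) ^ (-μ) := Real.rpow_pos_of_pos (by norm_num) _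
  -- convert ncard to the card of a filter
  have hset : {σ : Equiv.Perm (Fin n) | k ≤ (S.filter fun i => σ i ∈ Pink).card}
      = ↑(univ.filter fun σ : Equiv.Perm (Fin n) => k ≤ (S.filter fun i => σ i ∈ Pink).card) := by
    ext σ; simp
  rw [hset, Set.ncard_coe_finset]
  set N := (univ.filter fun σ : Equiv.Perm (Fin n) =>
      k ≤ (S.filter fun i => σ i ∈ Pink).card).card with hN
  have hmain : N * k.factorial
      ≤ S.card.descFactorial k * ((n - k).factorial * P.descFactorial k) :=
    lemMain n k P Pink S hPink
  by_cases hkn : k ≤ n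
  · -- main case
    have hnat : N * (k.factorial * n ^ k) ≤ S.card ^ k * P ^ k * n.factorial := by
      calc N * (k.factorial * n ^ k) = (N * k.factorial) * n ^ k := by ring
        _ ≤ (S.card.descFactorial k * ((n - k).factorial * P.descFactorial k)) * n ^ k :=
            Nat.mul_le_mul_right _ hmain
        _ = (S.card.descFactorial k * (P.descFactorial k * n ^ k)) * (n - k).factorial := by ring
        _ ≤ (S.card ^ k * (P ^ k * n.descFactorial k)) * (n - k).factorial := by
            apply Nat.mul_le_mul_right
            exact Nat.mul_le_mul (Nat.descFactorial_le_pow _ _) (lemRatio P n hPn k)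
        _ = S.card ^ k * P ^ k * ((n - k).factorial * n.descFactorial k) := by ring
        _ = S.card ^ k * P ^ k * n.factorial := by
            rw [Nat.factorial_mul_descFactorial hkn]
    have hden : (0:ℝ) < (k.factorial : ℝ) * (n:ℝ) ^ k := by positivity
    have hcast : (N:ℝ) ≤ (S.card:ℝ) ^ k * (P:ℝ) ^ k * (n.factorial:ℝ)
        / ((k.factorial:ℝ) * (n:ℝ) ^ k) := by
      rw [le_div_iff₀ hden]
      exact_mod_cast hnat
    have heq : (S.card:ℝ) ^ k * (P:ℝ) ^ k * (n.factorial:ℝ) / ((k.factorial:ℝ) * (n:ℝ) ^ k)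
        = (n.factorial:ℝ) * (((S.card:ℝ) * P / n) ^ k / k.factorial) := by
      have hn0 : (n:ℝ) ≠ 0 := by exact_mod_cast hn.ne'
      field_simp
      ring_nf
      rw [mul_assoc _ ((n:ℝ) ^ k), ← mul_pow (n:ℝ), mul_inv_cancel₀ hn0, one_pow, mul_one]
    have hsp : (S.card:ℝ) * P / n ≤ μ := by
      have hfl : (S.card:ℝ) ≤ (n:ℝ) * μ / P := by
        rw [hS]
        exact Nat.floor_le (by positivity)
      have hP' : (0:ℝ) < (P:ℝ) := by exact_mod_cast hP
      have hn' : (0:ℝ) < (n:ℝ) := by exact_mod_cast hn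
      rw [div_le_iff₀ hn']
      calc (S.card:ℝ) * P ≤ ((n:ℝ) * μ / P) * P := by
            apply mul_le_mul_of_nonneg_right hfl hP'.le
        _ = (n:ℝ) * μ := by field_simp
        _ = μ * n := by ring
    have hpow : ((S.card:ℝ) * P / n) ^ k ≤ μ ^ k := by
      apply pow_le_pow_left₀ (by positivity) hsp
    have hanal : μ ^ k / k.factorial ≤ (4:ℝ) ^ (-μ) :=
      lemAnalytic μ hμ0 k (Nat.le_ceil _)
    calc (N:ℝ) ≤ (n.factorial:ℝ) * (((S.card:ℝ) * P / n) ^ k / k.factorial) := by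
          rw [← heq]; exact hcast
      _ ≤ (n.factorial:ℝ) * (μ ^ k / k.factorial) := by
          apply mul_le_mul_of_nonneg_left _ (by positivity)
          gcongr
      _ ≤ (n.factorial:ℝ) * (4:ℝ) ^ (-μ) := by
          apply mul_le_mul_of_nonneg_left hanal (by positivity)
  · -- degenerate case: k > n ≥ P, so the event is empty
    push_neg at hkn
    have hPk : P.descFactorial k = 0 := Nat.descFactorial_of_lt (lt_of_le_of_lt hPn hkn)
    rw [hPk, Nat.mul_zero, Nat.mul_zero, Nat.le_zero] at hmain
    have : N = 0 := by
      rcases Nat.mul_eq_zero.mp hmain with h | h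
      · exact h
      · exact absurd h (Nat.factorial_ne_zero k)
    rw [this]
    simp only [Nat.cast_zero]
    positivity
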